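/- With T_S = ⋁_{A:v(A)=1}⋀_{i∈A}T_i and R(e_A^{0,t}) := P(T_i > t for all i ∈ A) (joint survival at the vector which is t on A and 0 off A), the reliability satisfies R_S(t) = Σ_{A⊆[n]} m_v(A) · R(e_A^{0,t}), where m_v is the Möbius transform of v. (Note R(e_∅) = 1.) -/

import Mathlib

open scoped ENNReal

/-- The Möbius transform of a set function `v : 2^[n] → ℤ`. -/
def mobiusTransform {n : ℕ} (v : Finset (Fin n) → ℤ) (A : Finset (Fin n)) : ℤ :=
  ∑ B ∈ A.powerset, (-1) ^ (A.card - B.card) * v B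

lemma mobius_inv {n : ℕ} (v : Finset (Fin n) → ℤ) (A : Finset (Fin n)) :
    ∑ B ∈ A.powerset, mobiusTransform v B = v A := by
  classical
  unfold mobiusTransform
  rw [Finset.sum_comm' (s := A.powerset) (t := fun B => B.powerset)
    (t' := A.powerset) (s' := fun C => A.powerset.filter (fun B => C ⊆ B))
    (h := by
      intro B C
      simp only [Finset.mem_powerset, Finset.mem_filter]
      constructor
      · rintro ⟨hBA, hCB⟩; exact ⟨⟨hBA, hCB⟩, hCB.trans hBA⟩
      · rintro ⟨⟨hBA, hCB⟩, _⟩; exact ⟨hBA, hCB⟩)]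
  have key : ∀ C ∈ A.powerset,
      (∑ B ∈ A.powerset.filter (fun B => C ⊆ B), (-1:ℤ) ^ (B.card - C.card) * v C)
        = (if C = A then 1 else 0) * v C := by
    intro C hC
    rw [Finset.mem_powerset] at hC
    rw [← Finset.sum_mul]
    congr 1
    have hre : (∑ B ∈ A.powerset.filter (fun B => C ⊆ B), (-1:ℤ) ^ (B.card - C.card))
        = ∑ D ∈ (A \ C).powerset, (-1:ℤ) ^ D.card := by
      apply Finset.sum_nbij' (i := fun B => B \ C) (j := fun D => D ∪ C)
      · intro B hB
        simp only [Finset.mem_filter, Finset.mem_powerset] at hB ⊢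
        exact Finset.sdiff_subset_sdiff hB.1 le_rfl
      · intro D hD
        simp only [Finset.mem_filter, Finset.mem_powerset] at hD ⊢
        exact ⟨Finset.union_subset (hD.trans (Finset.sdiff_subset)) hC, Finset.subset_union_right⟩
      · intro B hB
        simp only [Finset.mem_filter, Finset.mem_powerset] at hB
        exact Finset.sdiff_union_of_subset hB.2
      · intro D hD
        simp only [Finset.mem_powerset] at hD
        have : Disjoint D C := Finset.disjoint_of_subset_left hD Finset.sdiff_disjoint
        rw [Finset.union_sdiff_cancel_right this]
      · intro B hB
        simp only [Finset.mem_filter, Finset.mem_powerset] at hB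
        rw [Finset.card_sdiff_of_subset hB.2]
    rw [hre, Finset.sum_powerset_neg_one_pow_card]
    congr 1
    simp only [Finset.sdiff_eq_empty_iff_subset, eq_iff_iff]
    exact ⟨fun h => le_antisymm hC h, fun h => h ▸ le_rfl⟩
  rw [Finset.sum_congr rfl key]
  simp [ite_mul, Finset.sum_ite_eq, Finset.mem_powerset_self]

/-- Primal Möbius reliability formula:
`R_S(t) = Σ_A m_v(A) · P(∀ i ∈ A, T_i > t)`. -/
theorem reliability_mobius {n : ℕ} {Ω : Type*} [MeasurableSpace Ω]
    (μ : MeasureTheory.Measure Ω) [MeasureTheory.IsProbabilityMeasure μ]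
    (T : Fin n → Ω → ℝ≥0∞) (hT : ∀ i, Measurable (T i))
    (v : Finset (Fin n) → ℤ)
    (hv : ∀ A, v A = 0 ∨ v A = 1)
    (hmono : ∀ A B : Finset (Fin n), A ⊆ B → v A ≤ v B)
    (hnonconst : ∃ A B : Finset (Fin n), v A ≠ v B)
    (t : ℝ≥0∞) (ht : 0 ≤ t) :
    (μ {ω | (Finset.univ.filter (fun A : Finset (Fin n) => v A = 1)).sup
        (fun A => A.inf (fun i => T i ω)) > t}).toReal =
      ∑ A : Finset (Fin n), (mobiusTransform v A : ℝ) *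
        (μ {ω | ∀ i ∈ A, T i ω > t}).toReal := by
  classical
  -- `v ∅ = 0`
  have hv0 : v ∅ = 0 := by
    by_contra h
    have h1 : v ∅ = 1 := (hv ∅).resolve_left h
    obtain ⟨A, B, hAB⟩ := hnonconst
    have hall : ∀ C, v C = 1 := by
      intro C
      rcases hv C with h0 | h1' 
      · have := hmono ∅ C (Finset.empty_subset C); omega
      · exact h1'
    exact hAB ((hall A).trans (hall B).symm)
  set S : Ω → Finset (Fin n) := fun ω => Finset.univ.filter (fun i => t < T i ω) with hSdef
  have hmemS : ∀ ω i, i ∈ S ω ↔ t < T i ω := by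
    intro ω i; simp [hSdef]
  -- measurability of level sets of `S`
  have hm : ∀ C : Finset (Fin n), MeasurableSet {ω | S ω = C} := by
    intro C
    have hset : {ω | S ω = C} = ⋂ i, {ω | i ∈ C ↔ t < T i ω} := by
      ext ω
      simp only [Set.mem_setOf_eq, Set.mem_iInter, Finset.ext_iff, hmemS]
      constructor
      · intro h i; exact (h i).symm
      · intro h i; exact (h i).symm
    rw [hset]
    refine MeasurableSet.iInter fun i => ?_
    by_cases hi : i ∈ C
    · simpa [hi] using measurableSet_lt measurable_const (hT i)
    · have : {ω | i ∈ C ↔ t < T i ω} = {ω | t < T i ω}ᶜ := by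
        ext ω; simp [hi]
      rw [this]
      exact (measurableSet_lt measurable_const (hT i)).compl
  -- splitting a measure according to the value of `S`
  have hsplit : ∀ (q : Finset (Fin n) → Prop) [DecidablePred q],
      (μ {ω | q (S ω)}).toReal
        = ∑ C ∈ Finset.univ.filter q, (μ {ω | S ω = C}).toReal := by
    intro q _
    have hset : {ω | q (S ω)} = ⋃ C ∈ Finset.univ.filter q, {ω | S ω = C} := by
      ext ω
      simp only [Set.mem_setOf_eq, Set.mem_iUnion, Finset.mem_filter, Finset.mem_univ, true_and]
      constructor
      · intro h; exact ⟨S ω, h, rfl⟩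
      · rintro ⟨C, hC, hSC⟩; rw [hSC]; exact hC
    rw [hset, MeasureTheory.measure_biUnion_finset ?_ (fun C _ => hm C),
      ENNReal.toReal_sum (fun C _ => MeasureTheory.measure_ne_top μ _)]
    intro C hC D hD hCD
    rw [Function.onFun, Set.disjoint_left]
    intro ω hωC hωD
    have h1 : S ω = C := hωC
    have h2 : S ω = D := hωD
    exact hCD (h1.symm.trans h2)
  -- the structure event equals `{v (S ω) = 1}`
  have hLset : {ω | (Finset.univ.filter (fun A : Finset (Fin n) => v A = 1)).sup
      (fun A => A.inf (fun i => T i ω)) > t} = {ω | v (S ω) = 1} := by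
    ext ω
    simp only [Set.mem_setOf_eq, gt_iff_lt, Finset.lt_sup_iff, Finset.mem_filter,
      Finset.mem_univ, true_and]
    constructor
    · rintro ⟨A, hA1, hAinf⟩
      have hsub : A ⊆ S ω := by
        intro i hi
        rw [hmemS]
        exact lt_of_lt_of_le hAinf (Finset.inf_le hi)
      have := hmono A (S ω) hsub
      rcases hv (S ω) with h0 | h1
      · omega
      · exact h1
    · intro h1
      refine ⟨S ω, h1, ?_⟩
      have hne : (S ω).Nonempty := by
        rcases Finset.eq_empty_or_nonempty (S ω) with he | hne
        · rw [he] at h1; omega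
        · exact hne
      rw [← Finset.inf'_eq_inf hne]
      rw [Finset.lt_inf'_iff]
      intro i hi
      exact (hmemS ω i).mp hi
  rw [hLset, hsplit (fun C => v C = 1)]
  -- rewrite each term of the right-hand side
  have hterm : ∀ A : Finset (Fin n), (μ {ω | ∀ i ∈ A, T i ω > t}).toReal
      = ∑ C ∈ Finset.univ.filter (fun C => A ⊆ C), (μ {ω | S ω = C}).toReal := by
    intro A
    have : {ω | ∀ i ∈ A, T i ω > t} = {ω | A ⊆ S ω} := by
      ext ω
      simp only [Set.mem_setOf_eq, gt_iff_lt, Finset.subset_iff, hmemS]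
    rw [this]
    exact hsplit (fun C => A ⊆ C)
  simp only [hterm]
  rw [Finset.sum_congr rfl (fun A _ => Finset.mul_sum _ _ _)]
  rw [Finset.sum_comm' (s := (Finset.univ : Finset (Finset (Fin n)))) (t := fun A => Finset.univ.filter (fun C => A ⊆ C))
    (t' := (Finset.univ : Finset (Finset (Fin n)))) (s' := fun C => Finset.univ.filter (fun A => A ⊆ C))
    (h := by intro A C; simp)]
  rw [Finset.sum_congr rfl (fun C _ => (Finset.sum_mul _ _ _).symm)]
  have hps : ∀ C : Finset (Fin n), Finset.univ.filter (fun A => A ⊆ C) = C.powerset := by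
    intro C; ext A; simp [Finset.mem_powerset]
  have hcoef : ∀ C : Finset (Fin n),
      (∑ A ∈ Finset.univ.filter (fun A => A ⊆ C), (mobiusTransform v A : ℝ)) = (v C : ℝ) := by
    intro C
    rw [hps C, ← Int.cast_sum, mobius_inv]
  simp only [hcoef]
  rw [Finset.sum_filter]
  refine Finset.sum_congr rfl fun C _ => ?_
  rcases hv C with h0 | h1
  · simp [h0]
  · simp [h1]
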